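/- Let u, v ≥ 2 be integers with (u,v) not equal to (2,2), (3,2), (4,2), or (2,3). Then (u!)^v · v! < (1/2) · (uv)! / e^(uv/e). -/
import Mathlib

open Finset

/-- The key natural-number inequality. -/
def Kp (u v : ℕ) : Prop :=
  2 * 29 ^ (u * v) * u.factorial ^ v * v.factorial ≤ 20 ^ (u * v) * (u * v).factorial

lemma pow3 : ∀ u : ℕ, 2 ≤ u → 3 * 29 ^ u ≤ 60 ^ u := by
  intro u hu
  induction u, hu using Nat.le_induction with
  | base => norm_num
  | succ n hn ih =>
    have h29 : 3 * 29 ^ (n + 1) = 29 * (3 * 29 ^ n) := by ring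
    have h60 : (60:ℕ) ^ (n + 1) = 60 * 60 ^ n := by ring
    rw [h29, h60]
    exact le_trans (Nat.mul_le_mul_left 29 ih) (Nat.mul_le_mul_right _ (by norm_num))

lemma fac_add (n k : ℕ) :
    (n + k).factorial = n.factorial * ∏ i ∈ range k, (n + i + 1) := by
  induction k with
  | zero => simp
  | succ k ih =>
    rw [Finset.prod_range_succ, ← mul_assoc, ← ih, ← Nat.add_assoc, Nat.factorial_succ]
    ring

lemma prodge (u v : ℕ) :
    (v + 1) ^ u * u.factorial ≤ ∏ i ∈ range u, (u * v + i + 1) := by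
  calc (v + 1) ^ u * u.factorial = ∏ i ∈ range u, (v + 1) * (i + 1) := by
        rw [Finset.prod_mul_distrib, Finset.prod_const, Finset.prod_range_add_one_eq_factorial,
          card_range]
    _ ≤ ∏ i ∈ range u, (u * v + i + 1) := by
        apply Finset.prod_le_prod' -- maybe wrong name
        intro i hi
        have hi' : i + 1 ≤ u := Finset.mem_range.mp hi
        nlinarith [Nat.mul_le_mul_right v hi']

lemma stepv (u v : ℕ) (hu : 2 ≤ u) (hv : 2 ≤ v) (h : Kp u v) : Kp u (v + 1) := by
  have h2 : 29 ^ u * (v + 1) ≤ 20 ^ u * (v + 1) ^ u := by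
    obtain ⟨k, hk⟩ : ∃ k, u = k + 2 := ⟨u - 2, by omega⟩
    have h3p := pow3 u hu
    have h60 : (60:ℕ) ^ u = 3 * (20 ^ u * 3 ^ (k + 1)) := by
      subst hk; rw [show (60:ℕ) = 20 * 3 by norm_num, mul_pow]; ring
    have h1 : 29 ^ u ≤ 20 ^ u * 3 ^ (k + 1) := by omega
    have hle : (3:ℕ) ^ (k + 1) ≤ (v + 1) ^ (k + 1) := Nat.pow_le_pow_left (by omega) _
    calc 29 ^ u * (v + 1) ≤ (20 ^ u * 3 ^ (k + 1)) * (v + 1) := Nat.mul_le_mul_right _ h1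
      _ ≤ (20 ^ u * (v + 1) ^ (k + 1)) * (v + 1) :=
          Nat.mul_le_mul_right _ (Nat.mul_le_mul_left _ hle)
      _ = 20 ^ u * (v + 1) ^ u := by subst hk; ring
  have h3 : 29 ^ u * ((v + 1) * u.factorial) ≤ 20 ^ u * ∏ i ∈ range u, (u * v + i + 1) := by
    calc 29 ^ u * ((v + 1) * u.factorial) = (29 ^ u * (v + 1)) * u.factorial := by ring
      _ ≤ (20 ^ u * (v + 1) ^ u) * u.factorial := Nat.mul_le_mul_right _ h2
      _ = 20 ^ u * ((v + 1) ^ u * u.factorial) := by ring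
      _ ≤ 20 ^ u * ∏ i ∈ range u, (u * v + i + 1) :=
          Nat.mul_le_mul_left _ (prodge u v)
  unfold Kp at h ⊢
  have hfac : (u * (v + 1)).factorial
      = (u * v).factorial * ∏ i ∈ range u, (u * v + i + 1) := by
    rw [show u * (v + 1) = u * v + u by ring, fac_add]
  calc 2 * 29 ^ (u * (v + 1)) * u.factorial ^ (v + 1) * (v + 1).factorial
      = (2 * 29 ^ (u * v) * u.factorial ^ v * v.factorial)
        * (29 ^ u * ((v + 1) * u.factorial)) := by
        rw [show u * (v + 1) = u * v + u by ring, pow_add 29 (u * v) u,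
          Nat.factorial_succ v, pow_succ u.factorial v]
        ring
    _ ≤ (20 ^ (u * v) * (u * v).factorial)
        * (20 ^ u * ∏ i ∈ range u, (u * v + i + 1)) := Nat.mul_le_mul h h3
    _ = 20 ^ (u * (v + 1)) * (u * (v + 1)).factorial := by
        rw [hfac, show u * (v + 1) = u * v + u by ring, pow_add 20 (u * v) u]; ring

lemma stepu2 (u : ℕ) (hu : 1 ≤ u) (h : Kp u 2) : Kp (u + 1) 2 := by
  unfold Kp at h ⊢
  have hfac : ((u + 1) * 2).factorial = (u * 2).factorial * ((2*u+1) * (2*u+2)) := by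
    rw [show (u+1)*2 = u*2 + 1 + 1 by ring, Nat.factorial_succ, Nat.factorial_succ]
    ring_nf
  have h2 : 29 ^ 2 * ((u+1) * (u+1)) ≤ 20 ^ 2 * ((2*u+1) * (2*u+2)) := by nlinarith
  calc 2 * 29 ^ ((u+1) * 2) * (u+1).factorial ^ 2 * Nat.factorial 2
      = (2 * 29 ^ (u * 2) * u.factorial ^ 2 * Nat.factorial 2)
        * (29 ^ 2 * ((u+1) * (u+1))) := by
        rw [Nat.factorial_succ, show (u+1)*2 = u*2 + 2 by ring, pow_add]; ring
    _ ≤ (20 ^ (u * 2) * (u * 2).factorial) * (20 ^ 2 * ((2*u+1) * (2*u+2))) :=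
        Nat.mul_le_mul h h2
    _ = 20 ^ ((u+1) * 2) * ((u+1) * 2).factorial := by
        rw [hfac, show (u+1)*2 = u*2 + 2 by ring, pow_add]; ring

lemma Kp_up_v (u v0 : ℕ) (hu : 2 ≤ u) (hv0 : 2 ≤ v0) (base : Kp u v0) :
    ∀ v, v0 ≤ v → Kp u v := by
  intro v hv
  induction v, hv using Nat.le_induction with
  | base => exact base
  | succ n hn ih => exact stepv u n hu (le_trans hv0 hn) ih

lemma Kp52 : Kp 5 2 := by unfold Kp; norm_num [Nat.factorial]

lemma Kp_u2 (u : ℕ) (hu : 5 ≤ u) : Kp u 2 := by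
  induction u, hu using Nat.le_induction with
  | base => exact Kp52
  | succ n hn ih => exact stepu2 n (by omega) ih

lemma key (u v : ℕ) (hu : 2 ≤ u) (hv : 2 ≤ v)
    (h22 : (u, v) ≠ (2, 2)) (h32 : (u, v) ≠ (3, 2))
    (h42 : (u, v) ≠ (4, 2)) (h23 : (u, v) ≠ (2, 3)) : Kp u v := by
  rcases le_or_gt 5 u with hu5 | hu5
  · exact Kp_up_v u 2 (by omega) le_rfl (Kp_u2 u hu5) v hv
  · interval_cases u
    · -- u = 2
      have hv4 : 4 ≤ v := by
        rcases Nat.lt_or_ge v 4 with h | h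
        · interval_cases v <;> simp_all
        · exact h
      exact Kp_up_v 2 4 (by omega) (by omega) (by unfold Kp; norm_num [Nat.factorial]) v hv4
    · -- u = 3
      have hv3 : 3 ≤ v := by
        rcases Nat.lt_or_ge v 3 with h | h
        · interval_cases v <;> simp_all
        · exact h
      exact Kp_up_v 3 3 (by omega) (by omega) (by unfold Kp; norm_num [Nat.factorial]) v hv3
    · -- u = 4
      have hv3 : 3 ≤ v := by
        rcases Nat.lt_or_ge v 3 with h | h
        · interval_cases v <;> simp_all
        · exact h
      exact Kp_up_v 4 3 (by omega) (by omega) (by unfold Kp; norm_num [Nat.factorial]) v hv3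

lemma exp_inv_e_lt : Real.exp (1 / Real.exp 1) < 29 / 20 := by
  have he : (2.7182818283 : ℝ) < Real.exp 1 := Real.exp_one_gt_d9
  have hepos : (0:ℝ) < Real.exp 1 := Real.exp_pos 1
  have h1 : (1:ℝ) / Real.exp 1 < 0.368 := by
    rw [div_lt_iff₀ hepos]; nlinarith
  have hmono : Real.exp (1 / Real.exp 1) < Real.exp 0.368 := Real.exp_lt_exp.mpr h1
  have hsmall : Real.exp (0.0115 : ℝ) < 2000 / 1977 := by
    have h := Real.add_one_lt_exp (x := (-0.0115 : ℝ)) (by norm_num)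
    rw [Real.exp_neg] at h
    have hp : (0:ℝ) < Real.exp (0.0115 : ℝ) := Real.exp_pos _
    have hc : Real.exp (0.0115 : ℝ) * (Real.exp (0.0115 : ℝ))⁻¹ = 1 :=
      mul_inv_cancel₀ (ne_of_gt hp)
    nlinarith [h, hp, hc]
  have h368 : Real.exp (0.368 : ℝ) = Real.exp (0.0115 : ℝ) ^ (32 : ℕ) := by
    rw [← Real.exp_nat_mul]; norm_num
  have hfin : Real.exp (0.368 : ℝ) < 29 / 20 := by
    rw [h368]
    calc Real.exp (0.0115 : ℝ) ^ (32:ℕ) < (2000/1977 : ℝ) ^ (32:ℕ) := by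
          apply pow_lt_pow_left₀ hsmall (le_of_lt (Real.exp_pos _)) (by norm_num)
      _ < 29 / 20 := by norm_num
  linarith

theorem stmt6 (u v : ℕ) (hu : 2 ≤ u) (hv : 2 ≤ v)
    (h22 : (u, v) ≠ (2, 2)) (h32 : (u, v) ≠ (3, 2))
    (h42 : (u, v) ≠ (4, 2)) (h23 : (u, v) ≠ (2, 3)) :
    ((u.factorial : ℝ)) ^ v * v.factorial <
      (1 / 2) * (u * v).factorial / Real.exp ((u * v : ℝ) / Real.exp 1) := by
  have hK := key u v hu hv h22 h32 h42 h23
  unfold Kp at hK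
  have hKR : 2 * (29/20 : ℝ) ^ (u * v) * (u.factorial : ℝ) ^ v * (v.factorial : ℝ)
      ≤ ((u * v).factorial : ℝ) := by
    have h20 : (0:ℝ) < (20:ℝ) ^ (u*v) := by positivity
    have := (Nat.cast_le (α := ℝ)).mpr hK
    push_cast at this
    rw [div_pow, show (2:ℝ) * ((29:ℝ)^(u*v) / (20:ℝ)^(u*v)) * (u.factorial:ℝ)^v * v.factorial
      = (2 * (29:ℝ)^(u*v) * (u.factorial:ℝ)^v * v.factorial) / (20:ℝ)^(u*v) by ring,
      div_le_iff₀ h20]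
    nlinarith
  have hE : Real.exp ((u * v : ℝ) / Real.exp 1) < (29/20 : ℝ) ^ (u * v) := by
    have : ((u * v : ℝ)) / Real.exp 1 = (u * v : ℕ) * (1 / Real.exp 1) := by
      push_cast; ring
    rw [this, Real.exp_nat_mul]
    exact pow_lt_pow_left₀ exp_inv_e_lt (le_of_lt (Real.exp_pos _)) (Nat.mul_ne_zero (by omega) (by omega))
  have hApos : (0:ℝ) < (u.factorial : ℝ) ^ v * v.factorial := by positivity
  have hEpos : (0:ℝ) < Real.exp ((u * v : ℝ) / Real.exp 1) := Real.exp_pos _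
  rw [lt_div_iff₀ hEpos]
  nlinarith
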